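/- Let a, b ∈ ℂ, τ := (a+b)/2, γ := b − a, and for μ ∉ [a,b] let R(μ) := (τ−μ)·(1 − ((γ/2)/(τ−μ))²)^{1/2} with the principal square root. Fix ε ∈ {1, −1} and define f_ε(μ) := (τ−μ) − ε R(μ). Then for every μ ∈ ℂ∖[a,b] with R(μ) ≠ 0, f_ε is complex differentiable at μ with derivative f_ε'(μ) = (ε / R(μ)) · f_ε(μ). -/

import Mathlib

/-- With `τ = (a+b)/2`, `γ = b-a`, `R(z) = (τ-z)(1-((γ/2)/(τ-z))²)^{1/2}`
(principal square root) and `f_ε(z) = (τ-z) - ε R(z)` for `ε ∈ {1,-1}`,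
at every `μ` off the closed segment `[a,b]` with `R(μ) ≠ 0` the function `f_ε`
is complex differentiable with derivative `(ε/R(μ)) f_ε(μ)`. -/
theorem standard_root_ode (a b : ℂ) (ε : ℂ) (hε : ε = 1 ∨ ε = -1)
    (R f : ℂ → ℂ)
    (hR : R = fun z => ((a + b) / 2 - z) *
      ((1 : ℂ) - (((b - a) / 2) / ((a + b) / 2 - z)) ^ 2) ^ ((1 : ℂ) / 2))
    (hf : f = fun z => ((a + b) / 2 - z) - ε * R z)
    (μ : ℂ) (hμ : μ ∉ segment ℝ a b) (hRμ : R μ ≠ 0) :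
    HasDerivAt f ((ε / R μ) * f μ) μ := by
  subst hR hf
  beta_reduce at hRμ ⊢
  set τ : ℂ := (a+b)/2 with hτ
  set c : ℂ := (b-a)/2 with hc
  have hτseg : τ ∈ segment ℝ a b := by
    refine ⟨1/2, 1/2, by norm_num, by norm_num, by norm_num, ?_⟩
    rw [Complex.real_smul, Complex.real_smul, hτ]
    push_cast
    ring
  have hd0 : τ - μ ≠ 0 := sub_ne_zero.mpr (fun h => hμ (h ▸ hτseg))
  set u : ℂ := c / (τ - μ) with hu
  set w : ℂ := (1 : ℂ) - u ^ 2 with hw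
  have hslit : w ∈ Complex.slitPlane := by
    by_contra hcon
    rw [Complex.mem_slitPlane_iff] at hcon
    push_neg at hcon
    obtain ⟨hre, him⟩ := hcon
    have hu2 : u ^ 2 = 1 - w := by rw [hw]; ring
    have hre2 : (1:ℝ) ≤ (u ^ 2).re := by
      rw [hu2]
      simp only [Complex.sub_re, Complex.one_re]
      linarith
    have him2 : (u ^ 2).im = 0 := by
      rw [hu2]
      simp [Complex.sub_im, him]
    rw [pow_two] at hre2 him2
    rw [Complex.mul_re] at hre2
    rw [Complex.mul_im] at him2
    have him0 : u.im = 0 := by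
      by_contra h
      have hre0 : u.re = 0 := by
        have h2 : u.re * u.im = 0 := by nlinarith
        exact (mul_eq_zero.mp h2).resolve_right h
      nlinarith [sq_nonneg u.im]
    have hr1 : (1:ℝ) ≤ u.re * u.re := by rw [him0] at hre2; linarith
    have habs : (1:ℝ) ≤ |u.re| := by nlinarith [sq_abs u.re, abs_nonneg u.re, sq_nonneg (|u.re| - 1)]
    have hrne : u.re ≠ 0 := by intro h; rw [h] at habs; norm_num at habs
    have hune : u ≠ 0 := fun h => hrne (by rw [h]; simp)
    have hcne : c ≠ 0 := fun h => hune (by rw [hu, h]; simp)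
    have hcu : c / u = τ - μ := by rw [hu]; field_simp
    have hμeq : μ = τ - c / u := by rw [hcu]; ring
    apply hμ
    refine ⟨1/2 + 1/(2*u.re), 1/2 - 1/(2*u.re), ?_, ?_, by ring, ?_⟩
    · have := (abs_le.mp (by
        rw [abs_div, abs_one, abs_mul, abs_two]
        rw [div_le_iff₀ (by positivity)]
        linarith : |1/(2*u.re)| ≤ 1/2)).1
      linarith
    · have := (abs_le.mp (by
        rw [abs_div, abs_one, abs_mul, abs_two]
        rw [div_le_iff₀ (by positivity)]
        linarith : |1/(2*u.re)| ≤ 1/2)).2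
      linarith
    · have hur : u = (u.re : ℂ) := Complex.ext rfl (by simp [him0])
      have hrC : (u.re : ℂ) ≠ 0 := Complex.ofReal_ne_zero.mpr hrne
      rw [Complex.real_smul, Complex.real_smul, hμeq, hτ, hc, hur]
      push_cast
      simp only [Complex.ofReal_re]
      field_simp
      ring
  clear_value τ c u w
  have hw0 : w ≠ 0 := by
    intro h
    rw [h] at hslit
    exact (by simp [Complex.slitPlane] : (0:ℂ) ∉ Complex.slitPlane) hslit
  have hs0 : w ^ ((1:ℂ)/2) ≠ 0 := fun h => hRμ (by rw [h, mul_zero])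
  have hsq : w ^ ((1:ℂ)/2) * w ^ ((1:ℂ)/2) = w := by
    rw [← Complex.cpow_add _ _ hw0]
    norm_num
  -- derivative construction
  have hid : HasDerivAt (fun z : ℂ => τ - z) (-1) μ := by
    simpa using (hasDerivAt_id μ).const_sub τ
  have hcd : HasDerivAt (fun z : ℂ => c / (τ - z))
      ((0 * (τ - μ) - c * (-1)) / (τ - μ) ^ 2) μ :=
    (hasDerivAt_const μ c).div hid hd0
  have hu2d := hcd.pow 2
  have hwd := hu2d.const_sub (1:ℂ)
  have hslit' : (fun z : ℂ => (1:ℂ) - (c / (τ - z)) ^ 2) μ ∈ Complex.slitPlane := by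
    show (1:ℂ) - (c / (τ - μ)) ^ 2 ∈ Complex.slitPlane
    rw [← hu, ← hw]; exact hslit
  have hsd := hwd.cpow_const (c := (1:ℂ)/2) hslit'
  have hRd := hid.mul hsd
  have hfd := hid.sub (hRd.const_mul ε)
  convert hfd using 1
  case e'_4 => rfl
  case e'_5 => rfl
  case e'_8 => rfl
  beta_reduce
  simp only [Pi.pow_apply]
  rw [← hu, ← hw]
  have hexp : w ^ ((1:ℂ)/2 - 1) = (w ^ ((1:ℂ)/2))⁻¹ := by
    have : (1:ℂ)/2 - 1 = -(1/2) := by norm_num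
    rw [this, Complex.cpow_neg]
  rw [hexp]
  have hε2 : ε * ε = 1 := by rcases hε with h | h <;> rw [h] <;> ring
  have hwu : u ^ 2 = 1 - w := by rw [hw]; ring
  have hkey : w ^ ((1:ℂ)/2) * w ^ ((1:ℂ)/2) = 1 - u ^ 2 := by rw [hsq, hw]
  have hud : u * (τ - μ) = c := by rw [hu]; field_simp
  field_simp
  linear_combination (-2 * (τ-μ) * w^((1:ℂ)/2)) * hε2 +
    (-2*ε*(τ-μ)) * hkey + (2*ε*u) * hud
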